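/- Let γ, σ² : [0,1] → ℝ be continuous with σ²(u) > 0 for all u ∈ [0,1] (condition (UE)), let Γ(u) := ∫₀^u γ(v) dv, g := ∫₀¹ γ(v) dv, assume (E1): Γ(u) − g·u > 0 for all u ∈ (0,1), and let Ψ(u) := ∫_{1/2}^u σ²(v)/(2(Γ(v) − g·v)) dv. Then Ψ is integrable on (0,1) if and only if condition (E2) holds, i.e. if and only if ∫₀^{1/2} u/(Γ(u) − g·u) du + ∫_{1/2}^1 (1−u)/(Γ(u) − g·u) du < +∞; and in that case ∫₀¹ Ψ(u) du = −∫₀^{1/2} u·σ²(u)/(2(Γ(u) − g·u)) du + ∫_{1/2}^1 (1−u)·σ²(u)/(2(Γ(u) − g·u)) du. -/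

import Mathlib

open MeasureTheory Set Filter Topology

/-- `Γ(u) = ∫₀^u γ(v) dv`. -/
noncomputable def Gam (γ : ℝ → ℝ) (u : ℝ) : ℝ := ∫ v in (0:ℝ)..u, γ v

/-- market mean growth rate `g = ∫₀¹ γ(v) dv`. -/
noncomputable def mg (γ : ℝ → ℝ) : ℝ := ∫ v in (0:ℝ)..1, γ v

/-- `Ψ(u) = ∫_{1/2}^u σ²(v) / (2 (Γ(v) - g v)) dv`. -/
noncomputable def Psi (γ σ2 : ℝ → ℝ) (u : ℝ) : ℝ :=
  ∫ v in (1/2:ℝ)..u, σ2 v / (2 * (Gam γ v - mg γ * v))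

/-- critical diversity index `p_c = 2 (g - γ(1)) / σ²(1)`. -/
noncomputable def pcrit (γ σ2 : ℝ → ℝ) : ℝ := 2 * (mg γ - γ 1) / σ2 1

/-- critical index `q_c = 2 (γ(0) - g) / σ²(0)`. -/
noncomputable def qcrit (γ σ2 : ℝ → ℝ) : ℝ := 2 * (γ 0 - mg γ) / σ2 0

lemma meas_indicator_of_continuousOn {s : Set ℝ} (hs : IsOpen s) {f : ℝ → ℝ}
    (hf : ContinuousOn f s) : Measurable (s.indicator f) := by
  have h1 : Continuous (s.restrict f) := continuousOn_iff_continuous_restrict.mp hf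
  have h2 : s.indicator f =
      Function.extend (Subtype.val : s → ℝ) (s.restrict f) (fun _ => (0:ℝ)) := by
    funext x
    by_cases hx : x ∈ s
    · have := Subtype.val_injective.extend_apply (s.restrict f) (fun _ => (0:ℝ)) (⟨x, hx⟩ : s)
      rw [Set.indicator_of_mem hx]; exact this.symm
    · rw [Set.indicator_of_notMem hx, Function.extend_apply']
      rintro ⟨a, rfl⟩; exact hx a.2
  rw [h2]
  exact (MeasurableEmbedding.subtype_coe hs.measurableSet).measurable_extend
    h1.measurable measurable_const

lemma tonelli_right (a b : ℝ) (F : ℝ → ℝ) (hFm : Measurable F) :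
    ∫⁻ u in Set.Ioo a b, ∫⁻ v in Set.Ioc a u, ENNReal.ofReal (F v) =
      ∫⁻ v in Set.Ioo a b, ENNReal.ofReal (F v) * ENNReal.ofReal (b - v) := by
  set S : Set (ℝ × ℝ) := {p : ℝ × ℝ | a < p.2 ∧ p.2 ≤ p.1} with hS
  have hSmeas : MeasurableSet S := by
    apply MeasurableSet.inter
    · exact measurable_snd measurableSet_Ioi
    · exact measurableSet_le measurable_snd measurable_fst
  have hT : ∀ v : ℝ, MeasurableSet {u : ℝ | a < v ∧ v ≤ u} := by
    intro v
    by_cases h : a < v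
    · have : {u : ℝ | a < v ∧ v ≤ u} = Set.Ici v := by ext u; simp [h]
      rw [this]; exact measurableSet_Ici
    · have : {u : ℝ | a < v ∧ v ≤ u} = ∅ := by ext u; simp [h]
      rw [this]; exact MeasurableSet.empty
  have hker : AEMeasurable (Function.uncurry fun (u v : ℝ) =>
      ENNReal.ofReal (F v) * S.indicator 1 (u, v))
      ((volume.restrict (Set.Ioo a b)).prod volume) := by
    apply Measurable.aemeasurable
    have : (Function.uncurry fun (u v : ℝ) =>
        ENNReal.ofReal (F v) * S.indicator 1 (u, v)) =
        fun p : ℝ × ℝ => ENNReal.ofReal (F p.2) * S.indicator 1 p := by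
      funext p; simp [Function.uncurry]
    rw [this]
    exact (ENNReal.measurable_ofReal.comp (hFm.comp measurable_snd)).mul
      (measurable_const.indicator hSmeas)
  calc ∫⁻ u in Set.Ioo a b, ∫⁻ v in Set.Ioc a u, ENNReal.ofReal (F v)
      = ∫⁻ u in Set.Ioo a b, ∫⁻ v, ENNReal.ofReal (F v) * S.indicator 1 (u, v) := by
        refine lintegral_congr fun u => ?_
        rw [← lintegral_indicator measurableSet_Ioc]
        refine lintegral_congr fun v => ?_
        by_cases hv : v ∈ Set.Ioc a u
        · have h2 : (u, v) ∈ S := ⟨hv.1, hv.2⟩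
          simp [Set.indicator_of_mem hv, Set.indicator_of_mem h2]
        · have h2 : (u, v) ∉ S := fun h => hv ⟨h.1, h.2⟩
          simp [Set.indicator_of_notMem hv, Set.indicator_of_notMem h2]
    _ = ∫⁻ v, ∫⁻ u in Set.Ioo a b, ENNReal.ofReal (F v) * S.indicator 1 (u, v) :=
        lintegral_lintegral_swap hker
    _ = ∫⁻ v in Set.Ioo a b, ENNReal.ofReal (F v) * ENNReal.ofReal (b - v) := by
        rw [← lintegral_indicator measurableSet_Ioo]
        refine lintegral_congr fun v => ?_
        have step1 : ∫⁻ u in Set.Ioo a b, ENNReal.ofReal (F v) * S.indicator 1 (u, v)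
            = ENNReal.ofReal (F v) * volume (Set.Ioo a b ∩ {u : ℝ | a < v ∧ v ≤ u}) := by
          have heq : ∀ u : ℝ, ENNReal.ofReal (F v) * S.indicator (1 : ℝ × ℝ → ENNReal) (u, v)
              = Set.indicator {u : ℝ | a < v ∧ v ≤ u} (fun _ => ENNReal.ofReal (F v)) u := by
            intro u
            by_cases h : a < v ∧ v ≤ u
            · rw [Set.indicator_of_mem (show u ∈ {u : ℝ | a < v ∧ v ≤ u} from h),
                Set.indicator_of_mem (show (u, v) ∈ S from h)]
              simp
            · rw [Set.indicator_of_notMem (show u ∉ {u : ℝ | a < v ∧ v ≤ u} from h),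
                Set.indicator_of_notMem (show (u, v) ∉ S from h)]
              simp
          simp_rw [heq]
          rw [lintegral_indicator (hT v), setLIntegral_const,
            Measure.restrict_apply (hT v), Set.inter_comm]
        rw [step1]
        by_cases hv : v ∈ Set.Ioo a b
        · rw [Set.indicator_of_mem hv]
          congr 1
          have : Set.Ioo a b ∩ {u : ℝ | a < v ∧ v ≤ u} = Set.Ico v b := by
            ext u
            constructor
            · rintro ⟨⟨_, hub⟩, _, hvu⟩; exact ⟨hvu, hub⟩
            · rintro ⟨hvu, hub⟩; exact ⟨⟨lt_of_lt_of_le hv.1 hvu, hub⟩, hv.1, hvu⟩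
          rw [this, Real.volume_Ico]
        · rw [Set.indicator_of_notMem hv]
          have : Set.Ioo a b ∩ {u : ℝ | a < v ∧ v ≤ u} = ∅ := by
            ext u
            simp only [Set.mem_inter_iff, Set.mem_Ioo, Set.mem_setOf_eq, Set.mem_empty_iff_false,
              iff_false, not_and, and_imp]
            intro hau hub hav hvu
            exact hv ⟨hav, lt_of_le_of_lt hvu hub⟩
          rw [this]
          simp

lemma tonelli_left (a b : ℝ) (F : ℝ → ℝ) (hFm : Measurable F) :
    ∫⁻ u in Set.Ioo a b, ∫⁻ v in Set.Ioc u b, ENNReal.ofReal (F v) =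
      ∫⁻ v in Set.Ioo a b, ENNReal.ofReal (F v) * ENNReal.ofReal (v - a) := by
  set S : Set (ℝ × ℝ) := {p : ℝ × ℝ | p.1 < p.2 ∧ p.2 ≤ b} with hS
  have hSmeas : MeasurableSet S := by
    apply MeasurableSet.inter
    · exact measurableSet_lt measurable_fst measurable_snd
    · exact measurable_snd measurableSet_Iic
  have hT : ∀ v : ℝ, MeasurableSet {u : ℝ | u < v ∧ v ≤ b} := by
    intro v
    by_cases h : v ≤ b
    · have : {u : ℝ | u < v ∧ v ≤ b} = Set.Iio v := by ext u; simp [h]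
      rw [this]; exact measurableSet_Iio
    · have : {u : ℝ | u < v ∧ v ≤ b} = ∅ := by ext u; simp [h]
      rw [this]; exact MeasurableSet.empty
  have hker : AEMeasurable (Function.uncurry fun (u v : ℝ) =>
      ENNReal.ofReal (F v) * S.indicator 1 (u, v))
      ((volume.restrict (Set.Ioo a b)).prod volume) := by
    apply Measurable.aemeasurable
    have : (Function.uncurry fun (u v : ℝ) =>
        ENNReal.ofReal (F v) * S.indicator 1 (u, v)) =
        fun p : ℝ × ℝ => ENNReal.ofReal (F p.2) * S.indicator 1 p := by
      funext p; simp [Function.uncurry]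
    rw [this]
    exact (ENNReal.measurable_ofReal.comp (hFm.comp measurable_snd)).mul
      (measurable_const.indicator hSmeas)
  calc ∫⁻ u in Set.Ioo a b, ∫⁻ v in Set.Ioc u b, ENNReal.ofReal (F v)
      = ∫⁻ u in Set.Ioo a b, ∫⁻ v, ENNReal.ofReal (F v) * S.indicator 1 (u, v) := by
        refine lintegral_congr fun u => ?_
        rw [← lintegral_indicator measurableSet_Ioc]
        refine lintegral_congr fun v => ?_
        by_cases hv : v ∈ Set.Ioc u b
        · have h2 : (u, v) ∈ S := ⟨hv.1, hv.2⟩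
          simp [Set.indicator_of_mem hv, Set.indicator_of_mem h2]
        · have h2 : (u, v) ∉ S := fun h => hv ⟨h.1, h.2⟩
          simp [Set.indicator_of_notMem hv, Set.indicator_of_notMem h2]
    _ = ∫⁻ v, ∫⁻ u in Set.Ioo a b, ENNReal.ofReal (F v) * S.indicator 1 (u, v) :=
        lintegral_lintegral_swap hker
    _ = ∫⁻ v in Set.Ioo a b, ENNReal.ofReal (F v) * ENNReal.ofReal (v - a) := by
        rw [← lintegral_indicator measurableSet_Ioo]
        have hb : ∀ᵐ v : ℝ, v ≠ b := by
          have : (volume : Measure ℝ) {b} = 0 := measure_singleton b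
          rw [ae_iff]
          simpa using this
        refine lintegral_congr_ae ?_
        filter_upwards [hb] with v hvb
        have step1 : ∫⁻ u in Set.Ioo a b, ENNReal.ofReal (F v) * S.indicator 1 (u, v)
            = ENNReal.ofReal (F v) * volume (Set.Ioo a b ∩ {u : ℝ | u < v ∧ v ≤ b}) := by
          have heq : ∀ u : ℝ, ENNReal.ofReal (F v) * S.indicator (1 : ℝ × ℝ → ENNReal) (u, v)
              = Set.indicator {u : ℝ | u < v ∧ v ≤ b} (fun _ => ENNReal.ofReal (F v)) u := by
            intro u
            by_cases h : u < v ∧ v ≤ b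
            · rw [Set.indicator_of_mem (show u ∈ {u : ℝ | u < v ∧ v ≤ b} from h),
                Set.indicator_of_mem (show (u, v) ∈ S from h)]
              simp
            · rw [Set.indicator_of_notMem (show u ∉ {u : ℝ | u < v ∧ v ≤ b} from h),
                Set.indicator_of_notMem (show (u, v) ∉ S from h)]
              simp
          simp_rw [heq]
          rw [lintegral_indicator (hT v), setLIntegral_const,
            Measure.restrict_apply (hT v), Set.inter_comm]
        rw [step1]
        by_cases hv : v ∈ Set.Ioo a b
        · rw [Set.indicator_of_mem hv]
          congr 1
          have : Set.Ioo a b ∩ {u : ℝ | u < v ∧ v ≤ b} = Set.Ioo a v := by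
            ext u
            constructor
            · rintro ⟨⟨hau, _⟩, huv, _⟩; exact ⟨hau, huv⟩
            · rintro ⟨hau, huv⟩
              exact ⟨⟨hau, lt_trans huv hv.2⟩, huv, le_of_lt hv.2⟩
          rw [this, Real.volume_Ioo]
        · rw [Set.indicator_of_notMem hv]
          have : Set.Ioo a b ∩ {u : ℝ | u < v ∧ v ≤ b} = ∅ := by
            ext u
            simp only [Set.mem_inter_iff, Set.mem_Ioo, Set.mem_setOf_eq, Set.mem_empty_iff_false,
              iff_false, not_and, and_imp]
            intro hau hub huv hvb2
            exact hv ⟨lt_trans hau huv, lt_of_le_of_ne hvb2 hvb⟩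
          rw [this]
          simp

lemma integrableOn_iff_lintegral {f : ℝ → ℝ} {s : Set ℝ} (hs : MeasurableSet s)
    (hm : AEMeasurable f (volume.restrict s)) (hnn : ∀ x ∈ s, 0 ≤ f x) :
    IntegrableOn f s ↔ ∫⁻ x in s, ENNReal.ofReal (f x) < ⊤ := by
  have hae : 0 ≤ᵐ[volume.restrict s] f :=
    (ae_restrict_iff' hs).2 (Filter.Eventually.of_forall hnn)
  exact ⟨fun h => (hasFiniteIntegral_iff_ofReal hae).1 h.2,
    fun h => ⟨hm.aestronglyMeasurable, (hasFiniteIntegral_iff_ofReal hae).2 h⟩⟩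

lemma lintegral_ofReal_lt_top_iff {f g : ℝ → ℝ} {s : Set ℝ} (hs : MeasurableSet s) {c C : ℝ}
    (hc : 0 < c) (hC : 0 ≤ C)
    (hlb : ∀ x ∈ s, c * g x ≤ f x) (hub : ∀ x ∈ s, f x ≤ C * g x) :
    ((∫⁻ x in s, ENNReal.ofReal (f x)) < ⊤ ↔ (∫⁻ x in s, ENNReal.ofReal (g x)) < ⊤) := by
  have h1 : ∫⁻ x in s, ENNReal.ofReal (f x)
      ≤ ENNReal.ofReal C * ∫⁻ x in s, ENNReal.ofReal (g x) := by
    rw [← lintegral_const_mul' _ _ ENNReal.ofReal_ne_top]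
    refine lintegral_mono_ae ((ae_restrict_iff' hs).2 (Filter.Eventually.of_forall ?_))
    intro x hx
    calc ENNReal.ofReal (f x) ≤ ENNReal.ofReal (C * g x) := ENNReal.ofReal_le_ofReal (hub x hx)
      _ = ENNReal.ofReal C * ENNReal.ofReal (g x) := ENNReal.ofReal_mul hC
  have h2 : ∫⁻ x in s, ENNReal.ofReal (g x)
      ≤ ENNReal.ofReal c⁻¹ * ∫⁻ x in s, ENNReal.ofReal (f x) := by
    rw [← lintegral_const_mul' _ _ ENNReal.ofReal_ne_top]
    refine lintegral_mono_ae ((ae_restrict_iff' hs).2 (Filter.Eventually.of_forall ?_))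
    intro x hx
    have : g x ≤ c⁻¹ * f x := by
      rw [le_inv_mul_iff₀ hc]; exact hlb x hx
    calc ENNReal.ofReal (g x) ≤ ENNReal.ofReal (c⁻¹ * f x) := ENNReal.ofReal_le_ofReal this
      _ = ENNReal.ofReal c⁻¹ * ENNReal.ofReal (f x) := ENNReal.ofReal_mul (by positivity)
  constructor
  · intro h
    exact lt_of_le_of_lt h2 (ENNReal.mul_lt_top ENNReal.ofReal_lt_top h)
  · intro h
    exact lt_of_le_of_lt h1 (ENNReal.mul_lt_top ENNReal.ofReal_lt_top h)

lemma lint_psi_right (F : ℝ → ℝ) (hFm : Measurable F) (hF0 : ∀ v, 0 ≤ F v)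
    (hFi : ∀ u ∈ Set.Ioo (1/2:ℝ) 1, IntegrableOn F (Set.Ioc (1/2) u)) :
    ∫⁻ u in Set.Ioo (1/2:ℝ) 1, ENNReal.ofReal (∫ v in Set.Ioc (1/2:ℝ) u, F v)
      = ∫⁻ v in Set.Ioo (1/2:ℝ) 1, ENNReal.ofReal ((1 - v) * F v) := by
  calc ∫⁻ u in Set.Ioo (1/2:ℝ) 1, ENNReal.ofReal (∫ v in Set.Ioc (1/2:ℝ) u, F v)
      = ∫⁻ u in Set.Ioo (1/2:ℝ) 1, ∫⁻ v in Set.Ioc (1/2:ℝ) u, ENNReal.ofReal (F v) := by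
        refine setLIntegral_congr_fun measurableSet_Ioo ?_
        intro u hu
        exact ofReal_integral_eq_lintegral_ofReal (hFi u hu)
          (Filter.Eventually.of_forall fun v => hF0 v)
    _ = ∫⁻ v in Set.Ioo (1/2:ℝ) 1, ENNReal.ofReal (F v) * ENNReal.ofReal (1 - v) :=
        tonelli_right (1/2) 1 F hFm
    _ = ∫⁻ v in Set.Ioo (1/2:ℝ) 1, ENNReal.ofReal ((1 - v) * F v) := by
        refine setLIntegral_congr_fun measurableSet_Ioo ?_
        intro v hv
        beta_reduce
        rw [mul_comm, ← ENNReal.ofReal_mul (by linarith [hv.2] : (0:ℝ) ≤ 1 - v)]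

lemma lint_psi_left (F : ℝ → ℝ) (hFm : Measurable F) (hF0 : ∀ v, 0 ≤ F v)
    (hFi : ∀ u ∈ Set.Ioo (0:ℝ) (1/2), IntegrableOn F (Set.Ioc u (1/2))) :
    ∫⁻ u in Set.Ioo (0:ℝ) (1/2), ENNReal.ofReal (∫ v in Set.Ioc u (1/2:ℝ), F v)
      = ∫⁻ v in Set.Ioo (0:ℝ) (1/2), ENNReal.ofReal (v * F v) := by
  calc ∫⁻ u in Set.Ioo (0:ℝ) (1/2), ENNReal.ofReal (∫ v in Set.Ioc u (1/2:ℝ), F v)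
      = ∫⁻ u in Set.Ioo (0:ℝ) (1/2), ∫⁻ v in Set.Ioc u (1/2:ℝ), ENNReal.ofReal (F v) := by
        refine setLIntegral_congr_fun measurableSet_Ioo ?_
        intro u hu
        exact ofReal_integral_eq_lintegral_ofReal (hFi u hu)
          (Filter.Eventually.of_forall fun v => hF0 v)
    _ = ∫⁻ v in Set.Ioo (0:ℝ) (1/2), ENNReal.ofReal (F v) * ENNReal.ofReal (v - 0) :=
        tonelli_left 0 (1/2) F hFm
    _ = ∫⁻ v in Set.Ioo (0:ℝ) (1/2), ENNReal.ofReal (v * F v) := by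
        refine setLIntegral_congr_fun measurableSet_Ioo ?_
        intro v hv
        beta_reduce
        rw [sub_zero, mul_comm, ← ENNReal.ofReal_mul (le_of_lt hv.1)]

/-- under (UE) and (E1), Ψ is integrable on (0,1) iff (E2) holds, and
in that case ∫₀¹ Ψ = -∫₀^{1/2} u σ²(u)/(2(Γ(u)-gu)) du + ∫_{1/2}^1 (1-u) σ²(u)/(2(Γ(u)-gu)) du. -/
theorem stmt4 (γ σ2 : ℝ → ℝ) (hγc : ContinuousOn γ (Set.Icc 0 1))
    (hσc : ContinuousOn σ2 (Set.Icc 0 1)) (hUE : ∀ u ∈ Set.Icc (0:ℝ) 1, 0 < σ2 u)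
    (hE1 : ∀ u ∈ Set.Ioo (0:ℝ) 1, 0 < Gam γ u - mg γ * u) :
    (IntegrableOn (Psi γ σ2) (Set.Ioo 0 1) ↔
      (IntegrableOn (fun u => u / (Gam γ u - mg γ * u)) (Set.Ioo 0 (1/2)) ∧
        IntegrableOn (fun u => (1 - u) / (Gam γ u - mg γ * u)) (Set.Ioo (1/2) 1))) ∧
    ((IntegrableOn (fun u => u / (Gam γ u - mg γ * u)) (Set.Ioo 0 (1/2)) ∧
        IntegrableOn (fun u => (1 - u) / (Gam γ u - mg γ * u)) (Set.Ioo (1/2) 1)) →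
      ∫ u in Set.Ioo (0:ℝ) 1, Psi γ σ2 u =
        -(∫ u in Set.Ioo (0:ℝ) (1/2), u * σ2 u / (2 * (Gam γ u - mg γ * u))) +
          ∫ u in Set.Ioo (1/2:ℝ) 1, (1 - u) * σ2 u / (2 * (Gam γ u - mg γ * u))) := by
  have h2 : (0:ℝ) < 1/2 := by norm_num
  have h3 : (1/2:ℝ) < 1 := by norm_num
  -- continuity of Gam and the denominator
  have hγint : IntegrableOn γ (Set.uIcc (0:ℝ) 1) := by
    rw [Set.uIcc_of_le zero_le_one]; exact hγc.integrableOn_Icc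
  have hGamc : ContinuousOn (Gam γ) (Set.Icc 0 1) := by
    have h := intervalIntegral.continuousOn_primitive_interval (a := 0) (b := 1)
      (μ := volume) hγint
    rw [Set.uIcc_of_le zero_le_one] at h
    exact h
  have hDc : ContinuousOn (fun u => Gam γ u - mg γ * u) (Set.Icc 0 1) :=
    hGamc.sub ((continuous_const.mul continuous_id).continuousOn)
  -- continuity of the integrand F
  have hFc : ContinuousOn (fun v => σ2 v / (2 * (Gam γ v - mg γ * v))) (Set.Ioo 0 1) := by
    refine (hσc.mono Set.Ioo_subset_Icc_self).div
      ((continuousOn_const.mul (hDc.mono Set.Ioo_subset_Icc_self))) ?_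
    intro u hu
    have := hE1 u hu
    positivity
  have hFpos : ∀ v ∈ Set.Ioo (0:ℝ) 1, 0 < σ2 v / (2 * (Gam γ v - mg γ * v)) := by
    intro v hv
    have h1 := hUE v (Set.Ioo_subset_Icc_self hv)
    have h4 := hE1 v hv
    positivity
  -- bounds for σ2
  obtain ⟨x0, hx0, hmin⟩ := isCompact_Icc.exists_isMinOn (Set.nonempty_Icc.2 zero_le_one) hσc
  obtain ⟨x1, hx1, hmax⟩ := isCompact_Icc.exists_isMaxOn (Set.nonempty_Icc.2 zero_le_one) hσc
  set c : ℝ := σ2 x0 with hcdef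
  set C : ℝ := σ2 x1 with hCdef
  have hc0 : 0 < c := hUE x0 hx0
  have hcle : ∀ u ∈ Set.Icc (0:ℝ) 1, c ≤ σ2 u := fun u hu => hmin hu
  have hCge : ∀ u ∈ Set.Icc (0:ℝ) 1, σ2 u ≤ C := fun u hu => hmax hu
  have hC0 : 0 ≤ C := le_trans (le_of_lt hc0) (hcle x1 hx1)
  -- the extended integrand
  set Fi : ℝ → ℝ :=
    (Set.Ioo (0:ℝ) 1).indicator (fun v => σ2 v / (2 * (Gam γ v - mg γ * v))) with hFidef
  have hFim : Measurable Fi := meas_indicator_of_continuousOn isOpen_Ioo hFc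
  have hFi0 : ∀ v, 0 ≤ Fi v := fun v =>
    Set.indicator_nonneg (fun x hx => le_of_lt (hFpos x hx)) v
  have hFieq : ∀ v ∈ Set.Ioo (0:ℝ) 1, Fi v = σ2 v / (2 * (Gam γ v - mg γ * v)) :=
    fun v hv => Set.indicator_of_mem hv _
  have hIntR : ∀ u ∈ Set.Ioo (1/2:ℝ) 1, IntegrableOn Fi (Set.Ioc (1/2) u) := by
    intro u hu
    have hsub : Set.Icc (1/2:ℝ) u ⊆ Set.Ioo 0 1 := fun x hx =>
      ⟨lt_of_lt_of_le h2 hx.1, lt_of_le_of_lt hx.2 hu.2⟩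
    have h : IntegrableOn (fun v => σ2 v / (2 * (Gam γ v - mg γ * v)))
        (Set.Ioc (1/2) u) volume :=
      ((hFc.mono hsub).integrableOn_Icc).mono_set Set.Ioc_subset_Icc_self
    exact h.congr_fun (fun x hx => (hFieq x (hsub (Set.Ioc_subset_Icc_self hx))).symm)
      measurableSet_Ioc
  have hIntL : ∀ u ∈ Set.Ioo (0:ℝ) (1/2), IntegrableOn Fi (Set.Ioc u (1/2)) := by
    intro u hu
    have hsub : Set.Icc u (1/2:ℝ) ⊆ Set.Ioo 0 1 := fun x hx =>
      ⟨lt_of_lt_of_le hu.1 hx.1, lt_of_le_of_lt hx.2 h3⟩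
    have h : IntegrableOn (fun v => σ2 v / (2 * (Gam γ v - mg γ * v)))
        (Set.Ioc u (1/2)) volume :=
      ((hFc.mono hsub).integrableOn_Icc).mono_set Set.Ioc_subset_Icc_self
    exact h.congr_fun (fun x hx => (hFieq x (hsub (Set.Ioc_subset_Icc_self hx))).symm)
      measurableSet_Ioc
  -- formulas for Psi
  have hPsiR : ∀ u ∈ Set.Ioo (1/2:ℝ) 1, Psi γ σ2 u = ∫ v in Set.Ioc (1/2:ℝ) u, Fi v := by
    intro u hu
    rw [Psi, intervalIntegral.integral_of_le (le_of_lt hu.1)]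
    refine setIntegral_congr_fun measurableSet_Ioc fun v hv => ?_
    exact (hFieq v ⟨lt_trans h2 hv.1, lt_of_le_of_lt hv.2 hu.2⟩).symm
  have hPsiL : ∀ u ∈ Set.Ioo (0:ℝ) (1/2), Psi γ σ2 u = -∫ v in Set.Ioc u (1/2:ℝ), Fi v := by
    intro u hu
    rw [Psi, intervalIntegral.integral_symm, intervalIntegral.integral_of_le (le_of_lt hu.2)]
    congr 1
    refine setIntegral_congr_fun measurableSet_Ioc fun v hv => ?_
    exact (hFieq v ⟨lt_trans hu.1 hv.1, lt_of_le_of_lt hv.2 h3⟩).symm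
  -- continuity of Psi
  have hPsiCont : ContinuousOn (Psi γ σ2) (Set.Ioo 0 1) := by
    intro u0 hu0
    apply ContinuousAt.continuousWithinAt
    obtain ⟨hu0l, hu0r⟩ := hu0
    have h5 : 0 < min u0 (1/2) := lt_min hu0l h2
    set l : ℝ := min u0 (1/2) / 2 with hldef
    set r : ℝ := (max u0 (1/2) + 1) / 2 with hrdef
    have hl0 : 0 < l := by positivity
    have hlu : l < u0 := lt_of_lt_of_le (half_lt_self h5) (min_le_left _ _)
    have hl2 : l ≤ 1/2 := le_trans (le_of_lt (half_lt_self h5)) (min_le_right _ _)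
    have hmax1 : max u0 (1/2) < 1 := max_lt hu0r h3
    have hru : u0 < r := by
      have := le_max_left u0 (1/2); rw [hrdef]; linarith
    have hr2 : (1/2:ℝ) ≤ r := by
      have := le_max_right u0 (1/2); rw [hrdef]; linarith
    have hr1 : r < 1 := by rw [hrdef]; linarith
    have hlr : l ≤ r := by linarith
    have hsub : Set.Icc l r ⊆ Set.Ioo 0 1 := fun x hx =>
      ⟨lt_of_lt_of_le hl0 hx.1, lt_of_le_of_lt hx.2 hr1⟩
    have hFint : IntervalIntegrable (fun v => σ2 v / (2 * (Gam γ v - mg γ * v))) volume l r := by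
      rw [intervalIntegrable_iff_integrableOn_Ioc_of_le hlr]
      exact ((hFc.mono hsub).integrableOn_Icc).mono_set Set.Ioc_subset_Icc_self
    have hmem : (1/2:ℝ) ∈ Set.uIcc l r := by
      rw [Set.uIcc_of_le hlr]; exact ⟨hl2, hr2⟩
    have hcont := intervalIntegral.continuousOn_primitive_interval' hFint hmem
    rw [Set.uIcc_of_le hlr] at hcont
    have hPsieq : Psi γ σ2 =
        fun b => ∫ x in (1/2:ℝ)..b, σ2 x / (2 * (Gam γ x - mg γ * x)) := rfl
    rw [hPsieq]
    exact hcont.continuousAt (Icc_mem_nhds hlu hru)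
  have hPsiae : AEMeasurable (Psi γ σ2) (volume.restrict (Set.Ioo 0 1)) :=
    hPsiCont.aemeasurable measurableSet_Ioo
  have hPsiaeR : AEMeasurable (Psi γ σ2) (volume.restrict (Set.Ioo (1/2) 1)) :=
    hPsiae.mono_measure (Measure.restrict_mono
      (Set.Ioo_subset_Ioo (le_of_lt h2) le_rfl) le_rfl)
  have hPsiaeL : AEMeasurable (Psi γ σ2) (volume.restrict (Set.Ioo 0 (1/2))) :=
    hPsiae.mono_measure (Measure.restrict_mono
      (Set.Ioo_subset_Ioo le_rfl (le_of_lt h3)) le_rfl)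
  -- nonnegativity
  have hPsinnR : ∀ u ∈ Set.Ioo (1/2:ℝ) 1, 0 ≤ Psi γ σ2 u := by
    intro u hu; rw [hPsiR u hu]
    exact setIntegral_nonneg measurableSet_Ioc fun v _ => hFi0 v
  have hPsinnL : ∀ u ∈ Set.Ioo (0:ℝ) (1/2), 0 ≤ -Psi γ σ2 u := by
    intro u hu; rw [hPsiL u hu, neg_neg]
    exact setIntegral_nonneg measurableSet_Ioc fun v _ => hFi0 v
  -- key lintegral identities
  have KR : ∫⁻ u in Set.Ioo (1/2:ℝ) 1, ENNReal.ofReal (Psi γ σ2 u)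
      = ∫⁻ v in Set.Ioo (1/2:ℝ) 1,
          ENNReal.ofReal ((1 - v) * σ2 v / (2 * (Gam γ v - mg γ * v))) := by
    calc ∫⁻ u in Set.Ioo (1/2:ℝ) 1, ENNReal.ofReal (Psi γ σ2 u)
        = ∫⁻ u in Set.Ioo (1/2:ℝ) 1, ENNReal.ofReal (∫ v in Set.Ioc (1/2:ℝ) u, Fi v) :=
          setLIntegral_congr_fun measurableSet_Ioo
            (fun u hu => by rw [hPsiR u hu])
      _ = ∫⁻ v in Set.Ioo (1/2:ℝ) 1, ENNReal.ofReal ((1 - v) * Fi v) :=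
          lint_psi_right Fi hFim hFi0 hIntR
      _ = _ := by
          refine setLIntegral_congr_fun measurableSet_Ioo
            (fun v hv => ?_)
          rw [hFieq v ⟨lt_trans h2 hv.1, hv.2⟩, ← mul_div_assoc]
  have KL : ∫⁻ u in Set.Ioo (0:ℝ) (1/2), ENNReal.ofReal (-Psi γ σ2 u)
      = ∫⁻ v in Set.Ioo (0:ℝ) (1/2),
          ENNReal.ofReal (v * σ2 v / (2 * (Gam γ v - mg γ * v))) := by
    calc ∫⁻ u in Set.Ioo (0:ℝ) (1/2), ENNReal.ofReal (-Psi γ σ2 u)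
        = ∫⁻ u in Set.Ioo (0:ℝ) (1/2), ENNReal.ofReal (∫ v in Set.Ioc u (1/2:ℝ), Fi v) :=
          setLIntegral_congr_fun measurableSet_Ioo
            (fun u hu => by rw [hPsiL u hu, neg_neg])
      _ = ∫⁻ v in Set.Ioo (0:ℝ) (1/2), ENNReal.ofReal (v * Fi v) :=
          lint_psi_left Fi hFim hFi0 hIntL
      _ = _ := by
          refine setLIntegral_congr_fun measurableSet_Ioo
            (fun v hv => ?_)
          rw [hFieq v ⟨hv.1, lt_trans hv.2 h3⟩, ← mul_div_assoc]
  -- algebraic form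
  have hform : ∀ (x v : ℝ), (Gam γ v - mg γ * v) ≠ 0 →
      x * σ2 v / (2 * (Gam γ v - mg γ * v)) = σ2 v / 2 * (x / (Gam γ v - mg γ * v)) := by
    intro x v hv
    field_simp
  -- comparisons
  have hcompR : (∫⁻ u in Set.Ioo (1/2:ℝ) 1,
        ENNReal.ofReal ((1 - u) * σ2 u / (2 * (Gam γ u - mg γ * u)))) < ⊤ ↔
      (∫⁻ u in Set.Ioo (1/2:ℝ) 1,
        ENNReal.ofReal ((1 - u) / (Gam γ u - mg γ * u))) < ⊤ := by
    refine lintegral_ofReal_lt_top_iff measurableSet_Ioo (c := c/2) (C := C/2)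
      (half_pos hc0) (by linarith) ?_ ?_
    · intro u hu
      have hu' : u ∈ Set.Ioo (0:ℝ) 1 := ⟨lt_trans h2 hu.1, hu.2⟩
      have hD := hE1 u hu'
      rw [hform (1-u) u (ne_of_gt hD)]
      have hg0 : 0 ≤ (1-u) / (Gam γ u - mg γ * u) :=
        div_nonneg (by linarith [hu.2]) (le_of_lt hD)
      have hσ := hcle u (Set.Ioo_subset_Icc_self hu')
      exact mul_le_mul_of_nonneg_right (by linarith : c/2 ≤ σ2 u / 2) hg0
    · intro u hu
      have hu' : u ∈ Set.Ioo (0:ℝ) 1 := ⟨lt_trans h2 hu.1, hu.2⟩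
      have hD := hE1 u hu'
      rw [hform (1-u) u (ne_of_gt hD)]
      have hg0 : 0 ≤ (1-u) / (Gam γ u - mg γ * u) :=
        div_nonneg (by linarith [hu.2]) (le_of_lt hD)
      have hσ := hCge u (Set.Ioo_subset_Icc_self hu')
      exact mul_le_mul_of_nonneg_right (by linarith : σ2 u / 2 ≤ C/2) hg0
  have hcompL : (∫⁻ u in Set.Ioo (0:ℝ) (1/2),
        ENNReal.ofReal (u * σ2 u / (2 * (Gam γ u - mg γ * u)))) < ⊤ ↔
      (∫⁻ u in Set.Ioo (0:ℝ) (1/2),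
        ENNReal.ofReal (u / (Gam γ u - mg γ * u))) < ⊤ := by
    refine lintegral_ofReal_lt_top_iff measurableSet_Ioo (c := c/2) (C := C/2)
      (half_pos hc0) (by linarith) ?_ ?_
    · intro u hu
      have hu' : u ∈ Set.Ioo (0:ℝ) 1 := ⟨hu.1, lt_trans hu.2 h3⟩
      have hD := hE1 u hu'
      rw [hform u u (ne_of_gt hD)]
      have hg0 : 0 ≤ u / (Gam γ u - mg γ * u) :=
        div_nonneg (le_of_lt hu.1) (le_of_lt hD)
      have hσ := hcle u (Set.Ioo_subset_Icc_self hu')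
      exact mul_le_mul_of_nonneg_right (by linarith : c/2 ≤ σ2 u / 2) hg0
    · intro u hu
      have hu' : u ∈ Set.Ioo (0:ℝ) 1 := ⟨hu.1, lt_trans hu.2 h3⟩
      have hD := hE1 u hu'
      rw [hform u u (ne_of_gt hD)]
      have hg0 : 0 ≤ u / (Gam γ u - mg γ * u) :=
        div_nonneg (le_of_lt hu.1) (le_of_lt hD)
      have hσ := hCge u (Set.Ioo_subset_Icc_self hu')
      exact mul_le_mul_of_nonneg_right (by linarith : σ2 u / 2 ≤ C/2) hg0
  -- continuity / measurability of targets
  have hDne : ∀ u ∈ Set.Ioo (0:ℝ) 1, (Gam γ u - mg γ * u) ≠ 0 := fun u hu => ne_of_gt (hE1 u hu)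
  have hgRc : ContinuousOn (fun u => (1 - u) / (Gam γ u - mg γ * u)) (Set.Ioo 0 1) :=
    ((continuous_const.sub continuous_id).continuousOn).div
      (hDc.mono Set.Ioo_subset_Icc_self) hDne
  have hgLc : ContinuousOn (fun u => u / (Gam γ u - mg γ * u)) (Set.Ioo 0 1) :=
    (continuous_id.continuousOn).div (hDc.mono Set.Ioo_subset_Icc_self) hDne
  have hfRc : ContinuousOn
      (fun u => (1 - u) * σ2 u / (2 * (Gam γ u - mg γ * u))) (Set.Ioo 0 1) :=
    (((continuous_const.sub continuous_id).continuousOn).mul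
      (hσc.mono Set.Ioo_subset_Icc_self)).div
      (continuousOn_const.mul (hDc.mono Set.Ioo_subset_Icc_self))
      (fun u hu => by have := hE1 u hu; positivity)
  have hfLc : ContinuousOn
      (fun u => u * σ2 u / (2 * (Gam γ u - mg γ * u))) (Set.Ioo 0 1) :=
    ((continuous_id.continuousOn).mul (hσc.mono Set.Ioo_subset_Icc_self)).div
      (continuousOn_const.mul (hDc.mono Set.Ioo_subset_Icc_self))
      (fun u hu => by have := hE1 u hu; positivity)
  have hsubR : Set.Ioo (1/2:ℝ) 1 ⊆ Set.Ioo 0 1 := Set.Ioo_subset_Ioo (le_of_lt h2) le_rfl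
  have hsubL : Set.Ioo (0:ℝ) (1/2) ⊆ Set.Ioo 0 1 := Set.Ioo_subset_Ioo le_rfl (le_of_lt h3)
  -- the two integrability equivalences
  have IRiff : IntegrableOn (Psi γ σ2) (Set.Ioo (1/2) 1) ↔
      IntegrableOn (fun u => (1 - u) / (Gam γ u - mg γ * u)) (Set.Ioo (1/2) 1) := by
    rw [integrableOn_iff_lintegral measurableSet_Ioo hPsiaeR hPsinnR,
      integrableOn_iff_lintegral measurableSet_Ioo
        ((hgRc.mono hsubR).aemeasurable measurableSet_Ioo)
        (fun u hu => div_nonneg (by linarith [hu.2]) (le_of_lt (hE1 u (hsubR hu)))),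
      KR]
    exact hcompR
  have ILiff : IntegrableOn (Psi γ σ2) (Set.Ioo 0 (1/2)) ↔
      IntegrableOn (fun u => u / (Gam γ u - mg γ * u)) (Set.Ioo 0 (1/2)) := by
    have hneg : IntegrableOn (Psi γ σ2) (Set.Ioo 0 (1/2)) ↔
        IntegrableOn (fun u => -Psi γ σ2 u) (Set.Ioo 0 (1/2)) := by
      constructor
      · exact fun h => h.neg
      · intro h
        exact h.neg.congr (Filter.Eventually.of_forall fun x => by simp)
    rw [hneg,
      integrableOn_iff_lintegral (f := fun u => -Psi γ σ2 u) measurableSet_Ioo hPsiaeL.neg hPsinnL,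
      integrableOn_iff_lintegral measurableSet_Ioo
        ((hgLc.mono hsubL).aemeasurable measurableSet_Ioo)
        (fun u hu => div_nonneg (le_of_lt hu.1) (le_of_lt (hE1 u (hsubL hu)))),
      KL]
    exact hcompL
  -- splitting of the domain
  have hunion : Set.Ioc (0:ℝ) (1/2) ∪ Set.Ioo (1/2:ℝ) 1 = Set.Ioo 0 1 :=
    Set.Ioc_union_Ioo_eq_Ioo (le_of_lt h2) h3
  have hIocIoo : (volume : Measure ℝ).restrict (Set.Ioc (0:ℝ) (1/2))
      = (volume : Measure ℝ).restrict (Set.Ioo (0:ℝ) (1/2)) :=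
    (Measure.restrict_congr_set Ioo_ae_eq_Ioc).symm
  have hsplit : IntegrableOn (Psi γ σ2) (Set.Ioo 0 1) ↔
      IntegrableOn (Psi γ σ2) (Set.Ioo 0 (1/2)) ∧
        IntegrableOn (Psi γ σ2) (Set.Ioo (1/2) 1) := by
    constructor
    · exact fun h => ⟨h.mono_set hsubL, h.mono_set hsubR⟩
    · rintro ⟨hL, hR⟩
      have hL' : IntegrableOn (Psi γ σ2) (Set.Ioc 0 (1/2)) := by
        rw [IntegrableOn, hIocIoo]; exact hL
      rw [← hunion]
      exact hL'.union hR
  constructor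
  · rw [hsplit, ILiff, IRiff]
  · rintro ⟨hEL, hER⟩
    have hL : IntegrableOn (Psi γ σ2) (Set.Ioo 0 (1/2)) := ILiff.2 hEL
    have hR : IntegrableOn (Psi γ σ2) (Set.Ioo (1/2) 1) := IRiff.2 hER
    have hL' : IntegrableOn (Psi γ σ2) (Set.Ioc 0 (1/2)) := by
      rw [IntegrableOn, hIocIoo]; exact hL
    have hdisj : Disjoint (Set.Ioc (0:ℝ) (1/2)) (Set.Ioo (1/2:ℝ) 1) := by
      rw [Set.disjoint_left]
      rintro x ⟨_, hx2⟩ ⟨hx3, _⟩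
      exact absurd hx2 (not_le.2 hx3)
    have hsplitval : ∫ u in Set.Ioo (0:ℝ) 1, Psi γ σ2 u
        = (∫ u in Set.Ioo (0:ℝ) (1/2), Psi γ σ2 u)
          + ∫ u in Set.Ioo (1/2:ℝ) 1, Psi γ σ2 u := by
      rw [← hunion, setIntegral_union hdisj measurableSet_Ioo hL' hR]
      congr 1
      exact setIntegral_congr_set Ioo_ae_eq_Ioc.symm
    -- value on the right half
    have haeR : 0 ≤ᵐ[volume.restrict (Set.Ioo (1/2:ℝ) 1)] Psi γ σ2 :=
      (ae_restrict_iff' measurableSet_Ioo).2 (Filter.Eventually.of_forall hPsinnR)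
    have haefR : 0 ≤ᵐ[volume.restrict (Set.Ioo (1/2:ℝ) 1)]
        (fun u => (1 - u) * σ2 u / (2 * (Gam γ u - mg γ * u))) :=
      (ae_restrict_iff' measurableSet_Ioo).2 (Filter.Eventually.of_forall fun u hu => by
        have hD := hE1 u (hsubR hu)
        have h1u : (0:ℝ) ≤ 1 - u := by linarith [hu.2]
        have hσ := hUE u (Set.Ioo_subset_Icc_self (hsubR hu))
        positivity)
    have VR : ∫ u in Set.Ioo (1/2:ℝ) 1, Psi γ σ2 u
        = ∫ u in Set.Ioo (1/2:ℝ) 1, (1 - u) * σ2 u / (2 * (Gam γ u - mg γ * u)) := by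
      rw [integral_eq_lintegral_of_nonneg_ae haeR hPsiaeR.aestronglyMeasurable,
        integral_eq_lintegral_of_nonneg_ae haefR
          ((hfRc.mono hsubR).aemeasurable measurableSet_Ioo).aestronglyMeasurable,
        KR]
    -- value on the left half
    have haeL : 0 ≤ᵐ[volume.restrict (Set.Ioo (0:ℝ) (1/2))] (fun u => -Psi γ σ2 u) :=
      (ae_restrict_iff' measurableSet_Ioo).2 (Filter.Eventually.of_forall hPsinnL)
    have haefL : 0 ≤ᵐ[volume.restrict (Set.Ioo (0:ℝ) (1/2))]
        (fun u => u * σ2 u / (2 * (Gam γ u - mg γ * u))) :=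
      (ae_restrict_iff' measurableSet_Ioo).2 (Filter.Eventually.of_forall fun u hu => by
        have hD := hE1 u (hsubL hu)
        have hσ := hUE u (Set.Ioo_subset_Icc_self (hsubL hu))
        have hu0 := le_of_lt hu.1
        positivity)
    have VL : ∫ u in Set.Ioo (0:ℝ) (1/2), Psi γ σ2 u
        = -∫ u in Set.Ioo (0:ℝ) (1/2), u * σ2 u / (2 * (Gam γ u - mg γ * u)) := by
      have e0 : ∫ u in Set.Ioo (0:ℝ) (1/2), Psi γ σ2 u
          = -∫ u in Set.Ioo (0:ℝ) (1/2), -Psi γ σ2 u := by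
        rw [integral_neg, neg_neg]
      rw [e0, integral_eq_lintegral_of_nonneg_ae haeL hPsiaeL.neg.aestronglyMeasurable,
        integral_eq_lintegral_of_nonneg_ae haefL
          ((hfLc.mono hsubL).aemeasurable measurableSet_Ioo).aestronglyMeasurable,
        KL]
    rw [hsplitval, VL, VR]
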